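/- For positive integers s, r, k, N and h with h ≤ N, one has Σ_{n ≤ N} c_r^s(n) c_k^s(n+h) ≤ 2N · Φ_s(r^s) · τ(k). -/

import Mathlib

open Finset

/-- Generalized s-GCD `(a,b)_s`: the largest `l^s` dividing both `a` and `b`. -/
def sgcd (s a b : ℕ) : ℕ :=
  (Nat.findGreatest (fun l => l ^ s ∣ a ∧ l ^ s ∣ b) (Nat.gcd a b)) ^ s

/-- Klee's function `Φ_s(n)`. -/
def klee (s n : ℕ) : ℕ := ((Finset.Icc 1 n).filter (fun m => sgcd s m n = 1)).card

/-- Cohen–Ramanujan sum (exponential form). -/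
noncomputable def CRsum (s r n : ℕ) : ℂ :=
  ∑ a ∈ (Finset.Icc 1 (r ^ s)).filter (fun a => sgcd s a (r ^ s) = 1),
    Complex.exp (2 * Real.pi * Complex.I * n * a / (r ^ s))

/-- Cohen–Ramanujan sum (divisor form). -/
def CRsumD (s r n : ℕ) : ℤ :=
  ∑ d ∈ r.divisors.filter (fun d => d ^ s ∣ n),
    ArithmeticFunction.moebius (r / d) * (d : ℤ) ^ s

/-- `τ_s(m)`: number of s-th powers dividing `m`. -/
def taus (s m : ℕ) : ℕ := ((Finset.Icc 1 m).filter (fun l => l ^ s ∣ m)).card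

/-- Jordan totient via tuples. -/
def jordanT (s r : ℕ) : ℕ :=
  (Finset.univ.filter (fun v : Fin s → Fin r =>
    Nat.gcd (Finset.univ.gcd (fun i => (v i : ℕ))) r = 1)).card

namespace CRaux

open ArithmeticFunction
open scoped ArithmeticFunction.Moebius

lemma sgcd_eq_one_iff {s r a : ℕ} (hs : 0 < s) (ha : 0 < a) :
    sgcd s a (r ^ s) = 1 ↔ ∀ p : ℕ, p.Prime → p ∣ r → ¬ p ^ s ∣ a := by
  unfold sgcd
  set P : ℕ → Prop := fun l => l ^ s ∣ a ∧ l ^ s ∣ r ^ s with hP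
  set F := Nat.findGreatest P (Nat.gcd a (r ^ s)) with hF
  have hgcdpos : 0 < Nat.gcd a (r ^ s) := Nat.gcd_pos_of_pos_left _ ha
  constructor
  · intro h1 p hp hpr hpa
    have hpF : p ≤ F := by
      apply Nat.le_findGreatest
      · exact Nat.le_of_dvd hgcdpos (Nat.dvd_gcd (dvd_trans (dvd_pow_self p hs.ne') hpa)
          (dvd_trans hpr (dvd_pow_self r hs.ne')))
      · exact ⟨hpa, pow_dvd_pow_of_dvd hpr s⟩
    have hFeq : F = 1 := (pow_eq_one_iff.mp h1).resolve_right hs.ne'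
    have := hp.two_le
    omega
  · intro hall
    have hF1 : F = 1 := by
      rcases Nat.lt_or_ge F 2 with hlt | hge
      · interval_cases F
        · exfalso
          have : P 1 := ⟨by simp, by simp⟩
          have := Nat.le_findGreatest (Nat.one_le_iff_ne_zero.mpr hgcdpos.ne') this
          omega
        · rfl
      · exfalso
        have hPF : P F := Nat.findGreatest_of_ne_zero hF.symm (by omega)
        obtain ⟨p, hp, hpd⟩ := Nat.exists_prime_and_dvd (n := F) (by omega)
        have hpa : p ^ s ∣ a := dvd_trans (pow_dvd_pow_of_dvd hpd s) hPF.1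
        have hpr : p ∣ r := (Nat.pow_dvd_pow_iff hs.ne').mp
          (dvd_trans (pow_dvd_pow_of_dvd hpd s) hPF.2)
        exact hall p hp hpr hpa
    rw [hF1, one_pow]

lemma squarefree_prod_primes {F : Finset ℕ} (h : ∀ p ∈ F, p.Prime) :
    Squarefree (∏ p ∈ F, p) := by
  classical
  induction F using Finset.induction with
  | empty => simp
  | @insert q s hq ih =>
    rw [Finset.prod_insert hq]
    have hqp : q.Prime := h q (Finset.mem_insert_self q s)
    have hcop : Nat.Coprime q (∏ p ∈ s, p) := by
      apply Nat.Coprime.prod_right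
      intro p hp
      exact (Nat.coprime_primes hqp (h p (Finset.mem_insert_of_mem hp))).mpr
        (fun he => hq (he ▸ hp))
    rw [Nat.squarefree_mul hcop]
    exact ⟨hqp.squarefree, ih fun p hp => h p (Finset.mem_insert_of_mem hp)⟩

lemma pow_prod_dvd {s a : ℕ} {F : Finset ℕ} (h : ∀ p ∈ F, p.Prime)
    (hd : ∀ p ∈ F, p ^ s ∣ a) : (∏ p ∈ F, p) ^ s ∣ a := by
  classical
  induction F using Finset.induction with
  | empty => simp
  | @insert q t hq ih =>
    rw [Finset.prod_insert hq, mul_pow]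
    have hqp : q.Prime := h q (Finset.mem_insert_self q t)
    have hcop : Nat.Coprime (q ^ s) ((∏ p ∈ t, p) ^ s) :=
      Nat.Coprime.pow _ _ (Nat.Coprime.prod_right fun p hp =>
        (Nat.coprime_primes hqp (h p (Finset.mem_insert_of_mem hp))).mpr
          (fun he => hq (he ▸ hp)))
    exact hcop.mul_dvd_of_dvd_of_dvd (hd q (Finset.mem_insert_self q t))
      (ih (fun p hp => h p (Finset.mem_insert_of_mem hp))
          (fun p hp => hd p (Finset.mem_insert_of_mem hp)))

open scoped Classical in
lemma moebius_indicator {s r a : ℕ} (hr : 0 < r) :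
    (∑ d ∈ r.divisors.filter (fun d => d ^ s ∣ a), (μ d : ℤ))
      = if (∀ p : ℕ, p.Prime → p ∣ r → ¬ p ^ s ∣ a) then 1 else 0 := by
  set F := r.primeFactors.filter (fun p => p ^ s ∣ a) with hFdef
  have hFprime : ∀ p ∈ F, p.Prime := fun p hp =>
    Nat.prime_of_mem_primeFactors (Finset.mem_filter.mp hp).1
  set P := ∏ p ∈ F, p with hPdef
  have hPsq : Squarefree P := squarefree_prod_primes hFprime
  have hPr : P ∣ r := Finset.prod_primes_dvd r
    (fun p hp => (hFprime p hp).prime)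
    (fun p hp => Nat.dvd_of_mem_primeFactors (Finset.mem_filter.mp hp).1)
  have hPsa : P ^ s ∣ a :=
    pow_prod_dvd hFprime (fun p hp => (Finset.mem_filter.mp hp).2)
  have hsets : ∀ d : ℕ, Squarefree d →
      (d ∈ r.divisors.filter (fun d => d ^ s ∣ a) ↔ d ∈ P.divisors) := by
    intro d hd
    simp only [Finset.mem_filter, Nat.mem_divisors]
    constructor
    · rintro ⟨⟨hdr, -⟩, hda⟩
      refine ⟨?_, hPsq.ne_zero⟩
      have : d.primeFactors ⊆ F := by
        intro p hp
        have hpp := Nat.prime_of_mem_primeFactors hp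
        have hpd := Nat.dvd_of_mem_primeFactors hp
        refine Finset.mem_filter.mpr ⟨Nat.mem_primeFactors.mpr ⟨hpp, hpd.trans hdr, hr.ne'⟩, ?_⟩
        exact (pow_dvd_pow_of_dvd hpd s).trans hda
      calc d = ∏ p ∈ d.primeFactors, p := (Nat.prod_primeFactors_of_squarefree hd).symm
        _ ∣ P := Finset.prod_dvd_prod_of_subset _ _ _ this
    · rintro ⟨hdP, -⟩
      exact ⟨⟨hdP.trans hPr, hr.ne'⟩, (pow_dvd_pow_of_dvd hdP s).trans hPsa⟩
  have hsum : (∑ d ∈ r.divisors.filter (fun d => d ^ s ∣ a), (μ d : ℤ))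
      = ∑ d ∈ P.divisors, (μ d : ℤ) := by
    rw [← Finset.sum_filter_of_ne (p := fun d => Squarefree d)
        (f := fun d => (μ d : ℤ)) (by
          intro d _ hne
          by_contra hnsq
          exact hne (moebius_eq_zero_of_not_squarefree hnsq)),
      ← Finset.sum_filter_of_ne (s := P.divisors) (p := fun d => Squarefree d)
        (f := fun d => (μ d : ℤ)) (by
          intro d _ hne
          by_contra hnsq
          exact hne (moebius_eq_zero_of_not_squarefree hnsq))]
    apply Finset.sum_congr _ (fun _ _ => rfl)
    ext d
    constructor
    · intro hmem
      obtain ⟨hd1, hd2⟩ := Finset.mem_filter.mp hmem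
      exact Finset.mem_filter.mpr ⟨(hsets d hd2).mp hd1, hd2⟩
    · intro hmem
      obtain ⟨hd1, hd2⟩ := Finset.mem_filter.mp hmem
      exact Finset.mem_filter.mpr ⟨(hsets d hd2).mpr hd1, hd2⟩
  rw [hsum]
  have hmz : (∑ d ∈ P.divisors, (μ d : ℤ)) = if P = 1 then 1 else 0 := by
    have h1 := ArithmeticFunction.coe_mul_zeta_apply (f := (μ : ArithmeticFunction ℤ)) (x := P)
    rw [ArithmeticFunction.moebius_mul_coe_zeta] at h1
    rw [← h1, ArithmeticFunction.one_apply]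
  rw [hmz]
  have hPF : P = 1 ↔ (∀ p : ℕ, p.Prime → p ∣ r → ¬ p ^ s ∣ a) := by
    rw [hPdef, Finset.prod_eq_one_iff_of_one_le' (by
      intro p hp; exact (hFprime p hp).one_lt.le)]
    constructor
    · intro hall p hp hpr hpa
      have : p ∈ F := Finset.mem_filter.mpr
        ⟨Nat.mem_primeFactors.mpr ⟨hp, hpr, hr.ne'⟩, hpa⟩
      exact (hFprime p this).ne_one (hall p this)
    · intro hnone p hp
      exfalso
      obtain ⟨hmem, hpa⟩ := Finset.mem_filter.mp hp
      obtain ⟨hpp, hpr, -⟩ := Nat.mem_primeFactors.mp hmem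
      exact hnone p hpp hpr hpa
  by_cases hc : ∀ p : ℕ, p.Prime → p ∣ r → ¬ p ^ s ∣ a
  · rw [if_pos (hPF.mpr hc), if_pos hc]
  · simp only [hc, if_false]
    rw [if_neg (fun h1 => hc (hPF.mp h1))]

lemma geom_exp_sum (Q n : ℕ) (hQ : 0 < Q) :
    ∑ b ∈ Finset.Icc 1 Q, Complex.exp (2 * Real.pi * Complex.I * n * b / Q)
      = if Q ∣ n then (Q : ℂ) else 0 := by
  have hQC : (Q : ℂ) ≠ 0 := Nat.cast_ne_zero.mpr hQ.ne'
  set z9 : ℂ := Complex.exp (2 * Real.pi * Complex.I * n / Q) with hz9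
  have hterm : ∀ b : ℕ, Complex.exp (2 * Real.pi * Complex.I * n * b / Q) = z9 ^ b := by
    intro b
    rw [hz9, ← Complex.exp_nat_mul]
    ring_nf
  have hz9Q : z9 ^ Q = 1 := by
    rw [hz9, ← Complex.exp_nat_mul]
    have : (Q : ℂ) * (2 * Real.pi * Complex.I * n / Q) = (n : ℂ) * (2 * Real.pi * Complex.I) := by
      field_simp
    rw [this, Complex.exp_nat_mul_two_pi_mul_I]
  simp_rw [hterm]
  by_cases hdvd : Q ∣ n
  · have hz91 : z9 = 1 := by
      obtain ⟨c, rfl⟩ := hdvd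
      rw [hz9]
      have : 2 * (Real.pi:ℂ) * Complex.I * (↑(Q * c)) / Q
          = (c : ℂ) * (2 * Real.pi * Complex.I) := by
        push_cast; field_simp
      rw [this, Complex.exp_nat_mul_two_pi_mul_I]
    simp [hz91, hdvd]
  · have hz9ne : z9 ≠ 1 := by
      intro hone
      rw [hz9, Complex.exp_eq_one_iff] at hone
      obtain ⟨m, hm⟩ := hone
      have h2 : (2 * (Real.pi:ℂ) * Complex.I) ≠ 0 := by
        simp [Real.pi_ne_zero, Complex.I_ne_zero, Complex.ofReal_ne_zero]
      have hm' : (2 * (Real.pi:ℂ) * Complex.I) * ((n:ℂ)/Q)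
          = (2 * (Real.pi:ℂ) * Complex.I) * m := by
        linear_combination hm
      have hnq : (n:ℂ)/Q = m := mul_left_cancel₀ h2 hm'
      have hn : (n:ℂ) = m * Q := by
        field_simp at hnq; linear_combination hnq
      have hz : (n:ℤ) = m * Q := by exact_mod_cast hn
      exact hdvd (Int.natCast_dvd_natCast.mp ⟨m, by linarith⟩)
    have : Finset.Icc 1 Q = Finset.Ico 1 (Q+1) := by rw [Finset.Ico_add_one_right_eq_Icc]
    rw [this, Finset.sum_Ico_eq_sum_range]
    simp only [Nat.add_sub_cancel]
    have : ∑ i ∈ Finset.range Q, z9 ^ (1 + i) = z9 * ∑ i ∈ Finset.range Q, z9 ^ i := by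
      rw [Finset.mul_sum]; exact Finset.sum_congr rfl fun i _ => by rw [pow_add, pow_one]
    rw [this, geom_sum_eq hz9ne, hz9Q]
    simp [hdvd]

lemma CRsum_eq_CRsumD (s r n : ℕ) (hs : 0 < s) (hr : 0 < r) :
    CRsum s r n = (CRsumD s r n : ℂ) := by
  classical
  have hM : 0 < r ^ s := pow_pos hr s
  set M := r ^ s with hMdef
  set e : ℕ → ℂ := fun a => Complex.exp (2 * Real.pi * Complex.I * n * a / M) with he
  have step1 : CRsum s r n
      = ∑ a ∈ Finset.Icc 1 M,
          (↑(∑ d ∈ r.divisors.filter (fun d => d ^ s ∣ a), (μ d : ℤ)) : ℂ) * e a := by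
    rw [CRsum, Finset.sum_filter]
    apply Finset.sum_congr rfl
    intro a ha
    have ha1 : 0 < a := (Finset.mem_Icc.mp ha).1
    rw [moebius_indicator hr]
    by_cases hC : sgcd s a (r ^ s) = 1
    · rw [if_pos hC, if_pos ((sgcd_eq_one_iff hs ha1).mp hC)]
      rw [he]
      simp only [Int.cast_one, one_mul, hMdef]
      push_cast
      ring_nf
    · rw [if_neg hC, if_neg (fun hcond => hC ((sgcd_eq_one_iff hs ha1).mpr hcond))]
      simp
  have step2 : CRsum s r n
      = ∑ d ∈ r.divisors, (μ d : ℂ)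
          * ∑ a ∈ (Finset.Icc 1 M).filter (fun a => d ^ s ∣ a), e a := by
    rw [step1]
    simp_rw [Finset.sum_filter, Int.cast_sum, Finset.sum_mul, Finset.mul_sum]
    rw [Finset.sum_comm]
    apply Finset.sum_congr rfl
    intro d _
    apply Finset.sum_congr rfl
    intro a _
    by_cases hda : d ^ s ∣ a <;> simp [hda]
  have step3 : ∀ d ∈ r.divisors,
      ∑ a ∈ (Finset.Icc 1 M).filter (fun a => d ^ s ∣ a), e a
        = if (r / d) ^ s ∣ n then (((r / d) ^ s : ℕ) : ℂ) else 0 := by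
    intro d hd
    obtain ⟨hdr, hr0⟩ := Nat.mem_divisors.mp hd
    have hd0 : 0 < d := Nat.pos_of_dvd_of_pos hdr hr
    have hds : 0 < d ^ s := pow_pos hd0 s
    set Q := (r / d) ^ s with hQdef
    have hQ0 : 0 < Q := pow_pos (Nat.div_pos (Nat.le_of_dvd hr hdr) hd0) s
    have hMQ : M = d ^ s * Q := by
      rw [hMdef, hQdef, ← mul_pow, Nat.mul_div_cancel' hdr]
    rw [← geom_exp_sum Q n hQ0]
    symm
    apply Finset.sum_bij (fun (b : ℕ) (_ : b ∈ Finset.Icc 1 Q) => d ^ s * b)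
    · intro b hb
      obtain ⟨hb1, hb2⟩ := Finset.mem_Icc.mp hb
      refine Finset.mem_filter.mpr ⟨Finset.mem_Icc.mpr ⟨?_, ?_⟩, Dvd.intro b rfl⟩
      · exact Nat.one_le_iff_ne_zero.mpr (by positivity)
      · rw [hMQ]; exact Nat.mul_le_mul_left _ hb2
    · intro b1 hb1 b2 hb2 heq
      exact Nat.eq_of_mul_eq_mul_left hds heq
    · intro a ha
      obtain ⟨hmem, hdvd⟩ := Finset.mem_filter.mp ha
      obtain ⟨ha1, ha2⟩ := Finset.mem_Icc.mp hmem
      obtain ⟨b, rfl⟩ := hdvd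
      refine ⟨b, Finset.mem_Icc.mpr ⟨?_, ?_⟩, rfl⟩
      · rcases Nat.eq_zero_or_pos b with rfl | hb
        · simp at ha1
        · exact hb
      · rw [hMQ] at ha2
        exact Nat.le_of_mul_le_mul_left ha2 hds
    · intro b hb
      rw [he]
      congr 1
      have hdC : ((d : ℂ) ^ s) ≠ 0 := by
        exact_mod_cast (Nat.cast_ne_zero (R := ℂ)).mpr hds.ne'
      have hQC : (Q : ℂ) ≠ 0 := Nat.cast_ne_zero.mpr hQ0.ne'
      have hMC : (M : ℂ) = (d : ℂ) ^ s * Q := by exact_mod_cast congrArg (Nat.cast (R := ℂ)) hMQ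
      push_cast
      rw [hMC]
      field_simp
  have step4 : CRsum s r n
      = ∑ d ∈ r.divisors, (μ d : ℂ)
          * (if (r / d) ^ s ∣ n then (((r / d) ^ s : ℕ) : ℂ) else 0) := by
    rw [step2]
    exact Finset.sum_congr rfl fun d hd => by rw [step3 d hd]
  rw [step4]
  have hswap := Nat.sum_div_divisors (α := ℂ) r
    (fun d => (μ (r / d) : ℂ) * (if d ^ s ∣ n then ((d ^ s : ℕ) : ℂ) else 0))
  have hcongr : ∀ d ∈ r.divisors,
      (μ d : ℂ) * (if (r / d) ^ s ∣ n then (((r / d) ^ s : ℕ) : ℂ) else 0)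
        = (μ (r / (r / d)) : ℂ) * (if (r / d) ^ s ∣ n then (((r / d) ^ s : ℕ) : ℂ) else 0) := by
    intro d hd
    obtain ⟨hdr, hr0⟩ := Nat.mem_divisors.mp hd
    rw [Nat.div_div_self hdr hr0]
  rw [Finset.sum_congr rfl hcongr, hswap]
  rw [CRsumD, Finset.sum_filter]
  push_cast
  apply Finset.sum_congr rfl
  intro d _
  by_cases hdn : d ^ s ∣ n <;> simp [hdn]

lemma abs_CRsum_le (s r n : ℕ) : ‖CRsum s r n‖ ≤ (klee s (r ^ s) : ℝ) := by
  rw [CRsum, klee]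
  refine le_trans (norm_sum_le _ _) ?_
  have hone : ∀ a : ℕ,
      ‖Complex.exp (2 * Real.pi * Complex.I * n * a / ((r : ℂ) ^ s))‖ = 1 := by
    intro a
    have harg : 2 * (Real.pi : ℂ) * Complex.I * n * a / ((r : ℂ) ^ s)
        = ((2 * Real.pi * n * a / ((r : ℝ) ^ s) : ℝ) : ℂ) * Complex.I := by
      push_cast
      ring
    rw [harg, Complex.norm_exp_ofReal_mul_I]
  rw [Finset.sum_congr rfl fun a _ => hone a, Finset.sum_const, nsmul_eq_mul, mul_one]

lemma absD_le (s k m : ℕ) :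
    |CRsumD s k m| ≤ ((∑ d ∈ k.divisors.filter (fun d => d ^ s ∣ m), d ^ s : ℕ) : ℤ) := by
  rw [CRsumD]
  push_cast
  refine le_trans (Finset.abs_sum_le_sum_abs _ _) ?_
  apply Finset.sum_le_sum
  intro d hd
  rw [abs_mul, abs_pow, Int.abs_natCast]
  calc |(μ (k / d) : ℤ)| * (d : ℤ) ^ s ≤ 1 * (d : ℤ) ^ s := by
        apply mul_le_mul_of_nonneg_right ArithmeticFunction.abs_moebius_le_one
        positivity
    _ = (d : ℤ) ^ s := one_mul _

lemma mult_count (D N h : ℕ) (hD : 0 < D) :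
    ((Finset.Icc 1 N).filter (fun n => D ∣ n + h)).card * D ≤ N + h := by
  have hcard : ((Finset.Icc 1 N).filter (fun n => D ∣ n + h)).card ≤ (N + h) / D := by
    have hmaps : ∀ n ∈ (Finset.Icc 1 N).filter (fun n => D ∣ n + h),
        (n + h) / D ∈ Finset.Icc 1 ((N + h) / D) := by
      intro n hn
      obtain ⟨hmem, hdvd⟩ := Finset.mem_filter.mp hn
      obtain ⟨h1, h2⟩ := Finset.mem_Icc.mp hmem
      refine Finset.mem_Icc.mpr ⟨?_, Nat.div_le_div_right (by omega)⟩
      rw [Nat.one_le_div_iff hD]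
      exact Nat.le_of_dvd (by omega) hdvd
    have hinj : ∀ a ∈ (Finset.Icc 1 N).filter (fun n => D ∣ n + h),
        ∀ b ∈ (Finset.Icc 1 N).filter (fun n => D ∣ n + h),
        (a + h) / D = (b + h) / D → a = b := by
      intro a ha b hb heq
      have hda := (Finset.mem_filter.mp ha).2
      have hdb := (Finset.mem_filter.mp hb).2
      have h1 : (a + h) / D * D = a + h := Nat.div_mul_cancel hda
      have h2 : (b + h) / D * D = b + h := Nat.div_mul_cancel hdb
      rw [heq] at h1
      omega
    simpa using Finset.card_le_card_of_injOn _ hmaps hinj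
  calc ((Finset.Icc 1 N).filter (fun n => D ∣ n + h)).card * D
      ≤ (N + h) / D * D := Nat.mul_le_mul_right _ hcard
    _ ≤ N + h := Nat.div_mul_le_self _ _

lemma sum_divisor_count_le (s k N h : ℕ) (hk : 0 < k) (hhN : h ≤ N) :
    (∑ n ∈ Finset.Icc 1 N, ∑ d ∈ k.divisors.filter (fun d => d ^ s ∣ n + h), d ^ s)
      ≤ 2 * N * k.divisors.card := by
  classical
  have hswap : (∑ n ∈ Finset.Icc 1 N, ∑ d ∈ k.divisors.filter (fun d => d ^ s ∣ n + h), d ^ s)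
      = ∑ d ∈ k.divisors,
          ((Finset.Icc 1 N).filter (fun n => d ^ s ∣ n + h)).card * d ^ s := by
    simp_rw [Finset.sum_filter]
    rw [Finset.sum_comm]
    apply Finset.sum_congr rfl
    intro d _
    rw [← Finset.sum_filter, Finset.sum_const, smul_eq_mul]
  rw [hswap]
  calc ∑ d ∈ k.divisors, ((Finset.Icc 1 N).filter (fun n => d ^ s ∣ n + h)).card * d ^ s
      ≤ ∑ _d ∈ k.divisors, 2 * N := by
        apply Finset.sum_le_sum
        intro d hd
        have hd0 : 0 < d := Nat.pos_of_mem_divisors hd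
        have := mult_count (d ^ s) N h (pow_pos hd0 s)
        omega
    _ = 2 * N * k.divisors.card := by rw [Finset.sum_const, smul_eq_mul]; ring

end CRaux

theorem sum_CRsum_shift_le (s r k N h : ℕ) (hs : 0 < s) (hr : 0 < r) (hk : 0 < k)
    (hh : 0 < h) (hhN : h ≤ N) :
    (∑ n ∈ Finset.Icc 1 N, CRsum s r n * CRsum s k (n + h)).re
      ≤ 2 * (N : ℝ) * klee s (r ^ s) * k.divisors.card := by
  classical
  have h1 : (∑ n ∈ Finset.Icc 1 N, CRsum s r n * CRsum s k (n + h)).re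
      ≤ ‖∑ n ∈ Finset.Icc 1 N, CRsum s r n * CRsum s k (n + h)‖ :=
    Complex.re_le_norm _
  have h2 : ‖∑ n ∈ Finset.Icc 1 N, CRsum s r n * CRsum s k (n + h)‖
      ≤ ∑ n ∈ Finset.Icc 1 N, ‖CRsum s r n * CRsum s k (n + h)‖ :=
    norm_sum_le _ _
  have h3 : ∀ n : ℕ, ‖CRsum s r n * CRsum s k (n + h)‖
      ≤ (klee s (r ^ s) : ℝ)
        * ((∑ d ∈ k.divisors.filter (fun d => d ^ s ∣ n + h), d ^ s : ℕ) : ℝ) := by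
    intro n
    rw [norm_mul]
    apply mul_le_mul (CRaux.abs_CRsum_le s r n) _ (norm_nonneg _) (Nat.cast_nonneg _)
    rw [CRaux.CRsum_eq_CRsumD s k (n + h) hs hk, Complex.norm_intCast]
    have := CRaux.absD_le s k (n + h)
    calc |((CRsumD s k (n + h) : ℤ) : ℝ)| = ((|CRsumD s k (n + h)| : ℤ) : ℝ) := by
          rw [Int.cast_abs]
      _ ≤ _ := by exact_mod_cast this
  calc (∑ n ∈ Finset.Icc 1 N, CRsum s r n * CRsum s k (n + h)).re
      ≤ ∑ n ∈ Finset.Icc 1 N, ‖CRsum s r n * CRsum s k (n + h)‖ := h1.trans h2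
    _ ≤ ∑ n ∈ Finset.Icc 1 N, (klee s (r ^ s) : ℝ)
          * ((∑ d ∈ k.divisors.filter (fun d => d ^ s ∣ n + h), d ^ s : ℕ) : ℝ) :=
        Finset.sum_le_sum fun n _ => h3 n
    _ = (klee s (r ^ s) : ℝ)
          * ((∑ n ∈ Finset.Icc 1 N,
              ∑ d ∈ k.divisors.filter (fun d => d ^ s ∣ n + h), d ^ s : ℕ) : ℝ) := by
        rw [← Finset.mul_sum]
        push_cast
        ring
    _ ≤ (klee s (r ^ s) : ℝ) * ((2 * N * k.divisors.card : ℕ) : ℝ) := by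
        apply mul_le_mul_of_nonneg_left _ (Nat.cast_nonneg _)
        exact_mod_cast CRaux.sum_divisor_count_le s k N h hk hhN
    _ = 2 * (N : ℝ) * klee s (r ^ s) * k.divisors.card := by push_cast; ring
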